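/- Let λ ≠ 0, let x, x̃ : ℤ/Nℤ → ℝ with x̃_k−x_k−λ ≠ 0 and x_k−x̃_{k−1}−λ ≠ 0 for all k, and define q : ℤ/Nℤ → ℝ by q_k = ((x̃_k−x_k+λ)/(x̃_k−x_k−λ))·((x_k−x̃_{k−1}+λ)/(x_k−x̃_{k−1}−λ)). Then the monodromy matrix T = L_{N−1}·L_{N−2}·⋯·L_1·L_0 satisfies T · (x̃_{−1}, 1)ᵀ = (∏_{k∈ℤ/Nℤ} 2λ·(x̃_{k−1}−x_k−λ)/(x̃_k−x_k−λ)) · (x̃_{−1}, 1)ᵀ; in particular, (2λ)^N·∏_{k∈ℤ/Nℤ}(x̃_{k−1}−x_k−λ)/(x̃_k−x_k−λ) is an eigenvalue of T. -/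

import Mathlib

/-- Transition matrix of the zero curvature representation of the Bäcklund
transformation for the symmetric rational multiplicative Toda-type system
(with `q_k = e^{2p_k}`). -/
noncomputable def ratMultTodaL (N : ℕ) (lam : ℝ) (x q : ZMod N → ℝ) (i : ℕ) :
    Matrix (Fin 2) (Fin 2) ℝ :=
  !![lam * (q (i : ZMod N) + 1) + x (i : ZMod N) * (q (i : ZMod N) - 1),
       (lam ^ 2 - x (i : ZMod N) ^ 2) * (q (i : ZMod N) - 1);
     q (i : ZMod N) - 1,
       lam * (q (i : ZMod N) + 1) - x (i : ZMod N) * (q (i : ZMod N) - 1)]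

/-- Monodromy matrix `T = L_{N-1} ⬝ ⋯ ⬝ L_1 ⬝ L_0`. -/
noncomputable def ratMultTodaT (N : ℕ) (lam : ℝ) (x q : ZMod N → ℝ) :
    Matrix (Fin 2) (Fin 2) ℝ :=
  ((List.range N).reverse.map (ratMultTodaL N lam x q)).prod

lemma ratMultTodaL_step (N : ℕ) [NeZero N] (lam : ℝ) (x xt q : ZMod N → ℝ)
    (hx1 : ∀ k : ZMod N, xt k - x k - lam ≠ 0)
    (hx2 : ∀ k : ZMod N, x k - xt (k - 1) - lam ≠ 0)
    (hq : ∀ k : ZMod N,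
      q k = ((xt k - x k + lam) / (xt k - x k - lam)) *
        ((x k - xt (k - 1) + lam) / (x k - xt (k - 1) - lam)))
    (i : ℕ) :
    (ratMultTodaL N lam x q i).mulVec ![xt ((i : ZMod N) - 1), 1] =
      (2 * lam * (xt ((i : ZMod N) - 1) - x (i : ZMod N) - lam) /
        (xt (i : ZMod N) - x (i : ZMod N) - lam)) • ![xt (i : ZMod N), 1] := by
  set k : ZMod N := ((i : ℕ) : ZMod N) with hk
  have h1 := hx1 k
  have h2 := hx2 k
  funext j
  fin_cases j <;>
    simp [ratMultTodaL, Matrix.mulVec, dotProduct, ← hk, hq k] <;>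
    field_simp <;> ring

lemma ratMultToda_partial (N : ℕ) [NeZero N] (lam : ℝ) (x xt q : ZMod N → ℝ)
    (hx1 : ∀ k : ZMod N, xt k - x k - lam ≠ 0)
    (hx2 : ∀ k : ZMod N, x k - xt (k - 1) - lam ≠ 0)
    (hq : ∀ k : ZMod N,
      q k = ((xt k - x k + lam) / (xt k - x k - lam)) *
        ((x k - xt (k - 1) + lam) / (x k - xt (k - 1) - lam)))
    (m : ℕ) :
    (((List.range m).reverse.map (ratMultTodaL N lam x q)).prod).mulVec ![xt (-1), 1] =
      (∏ i ∈ Finset.range m,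
        2 * lam * (xt ((i : ZMod N) - 1) - x (i : ZMod N) - lam) /
          (xt (i : ZMod N) - x (i : ZMod N) - lam)) •
        ![xt ((m : ZMod N) - 1), 1] := by
  induction m with
  | zero => simp
  | succ m ih =>
      have hrev : (List.range (m + 1)).reverse = m :: (List.range m).reverse := by
        rw [List.range_succ, List.reverse_append]; simp
      rw [hrev, List.map_cons, List.prod_cons, ← Matrix.mulVec_mulVec, ih,
        Matrix.mulVec_smul, ratMultTodaL_step N lam x xt q hx1 hx2 hq m,
        Finset.prod_range_succ, smul_smul]
      have : ((m + 1 : ℕ) : ZMod N) - 1 = ((m : ℕ) : ZMod N) := by push_cast; ring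
      rw [this, mul_comm]


/-- For the periodic symmetric rational multiplicative Toda-type
system, `(2λ)^N ∏ (x̃_{k−1} − x_k − λ)/(x̃_k − x_k − λ)` is an eigenvalue of
the monodromy matrix, with eigenvector `(x̃_{−1}, 1)ᵀ`. -/
theorem ratMultToda_monodromy_eigenvalue
    (N : ℕ) [NeZero N] (lam : ℝ) (hlam : lam ≠ 0) (x xt q : ZMod N → ℝ)
    (hx1 : ∀ k : ZMod N, xt k - x k - lam ≠ 0)
    (hx2 : ∀ k : ZMod N, x k - xt (k - 1) - lam ≠ 0)
    (hq : ∀ k : ZMod N,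
      q k = ((xt k - x k + lam) / (xt k - x k - lam)) *
        ((x k - xt (k - 1) + lam) / (x k - xt (k - 1) - lam))) :
    (ratMultTodaT N lam x q).mulVec ![xt (-1), 1] =
      (∏ k : ZMod N, 2 * lam * (xt (k - 1) - x k - lam) / (xt k - x k - lam)) •
        ![xt (-1), 1] ∧
    Module.End.HasEigenvalue (Matrix.toLin' (ratMultTodaT N lam x q))
      ((2 * lam) ^ N * ∏ k : ZMod N, (xt (k - 1) - x k - lam) / (xt k - x k - lam)) := by
  have hN : ((N : ℕ) : ZMod N) = 0 := ZMod.natCast_self N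
  have hprod : (∏ i ∈ Finset.range N,
        2 * lam * (xt ((i : ZMod N) - 1) - x (i : ZMod N) - lam) /
          (xt (i : ZMod N) - x (i : ZMod N) - lam)) =
      ∏ k : ZMod N, 2 * lam * (xt (k - 1) - x k - lam) / (xt k - x k - lam) := by
    refine Finset.prod_nbij' (fun i => ((i : ℕ) : ZMod N)) (fun k => k.val) ?_ ?_ ?_ ?_ ?_
    · intro i _; exact Finset.mem_univ _
    · intro k _; exact Finset.mem_range.mpr (ZMod.val_lt k)
    · intro i hi; exact ZMod.val_natCast_of_lt (Finset.mem_range.mp hi)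
    · intro k _; exact ZMod.natCast_rightInverse k
    · intro i _; rfl
  have hmain : (ratMultTodaT N lam x q).mulVec ![xt (-1), 1] =
      (∏ k : ZMod N, 2 * lam * (xt (k - 1) - x k - lam) / (xt k - x k - lam)) •
        ![xt (-1), 1] := by
    have := ratMultToda_partial N lam x xt q hx1 hx2 hq N
    rw [hN] at this
    rw [ratMultTodaT, this, hprod]
    norm_num
  refine ⟨hmain, ?_⟩
  have hscal : (∏ k : ZMod N, 2 * lam * (xt (k - 1) - x k - lam) / (xt k - x k - lam)) =
      (2 * lam) ^ N * ∏ k : ZMod N, (xt (k - 1) - x k - lam) / (xt k - x k - lam) := by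
    calc ∏ k : ZMod N, 2 * lam * (xt (k - 1) - x k - lam) / (xt k - x k - lam)
        = ∏ k : ZMod N, (2 * lam) * ((xt (k - 1) - x k - lam) / (xt k - x k - lam)) := by
          refine Finset.prod_congr rfl fun k _ => ?_
          rw [mul_div_assoc]
      _ = (2 * lam) ^ N * ∏ k : ZMod N, (xt (k - 1) - x k - lam) / (xt k - x k - lam) := by
          rw [Finset.prod_mul_distrib, Finset.prod_const, Finset.card_univ, ZMod.card]
  rw [← hscal]
  have hv : (![xt (-1), 1] : Fin 2 → ℝ) ≠ 0 := by
    intro h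
    have := congrFun h 1
    simp at this
  refine Module.End.hasEigenvalue_of_hasEigenvector ⟨?_, hv⟩
  rw [Module.End.mem_eigenspace_iff, Matrix.toLin'_apply, hmain]
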